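/- Let n ≥ 2, D = 2^n, and let μ be a probability measure on the unit sphere of ℂ^D whose output-probability moments of total degree at most 4 match the Haar values up to additive error 10^{−3}·D^{−10}: for every tuple of pairwise distinct strings x₁,…,x_k ∈ {0,1}^n and positive integers λ₁,…,λ_k with t = λ₁+⋯+λ_k ≤ 4, |E_{ψ∼μ}[∏_{l=1}^k P_ψ(x_l)^{λ_l}] − (∏_l λ_l!)/(D·(D+1)···(D+t−1))| ≤ 10^{−3}·D^{−10}. Then for every c > 0, μ{ψ : d_TV(P_ψ, 𝒰) ≥ 1/(20·√(c+18))} ≥ 1 − 100·2^{−n} − 25/c. -/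

import Mathlib

open MeasureTheory

/-- The Borel measurable structure on `EuclideanSpace ℂ ι`. -/
noncomputable instance euclideanComplexMeasurableSpace (ι : Type*) :
    MeasurableSpace (EuclideanSpace ℂ ι) :=
  MeasurableSpace.comap (WithLp.ofLp (p := 2)) MeasurableSpace.pi

instance euclideanComplexBorelSpace (ι : Type*) [Finite ι] :
    BorelSpace (EuclideanSpace ℂ ι) := PiLp.borelSpace 2 (X := fun _ : ι => ℂ)

lemma factB (D : ℝ) (hD : 4 ≤ D) :
    D * ((24/(D*(D+1)*(D+2)*(D+3)) + 1/(1000*D^10))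
      - 4*D⁻¹*(6/(D*(D+1)*(D+2)) - 1/(1000*D^10))
      + 6*D⁻¹^2*(2/(D*(D+1)) + 1/(1000*D^10))
      - 4*D⁻¹^3*(1/D - 1/(1000*D^10))
      + D⁻¹^4)
    ≤ 2500*(2/(D+1) - 3/(2*D))^3 := by
  have hD0 : (0:ℝ) < D := by linarith
  have h1 : (0:ℝ) < D+1 := by linarith
  have h2 : (0:ℝ) < D+2 := by linarith
  have h3 : (0:ℝ) < D+3 := by linarith
  have hu : (0:ℝ) ≤ D - 4 := by linarith
  have e1 : D * ((24/(D*(D+1)*(D+2)*(D+3)) + 1/(1000*D^10))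
      - 4*D⁻¹*(6/(D*(D+1)*(D+2)) - 1/(1000*D^10))
      + 6*D⁻¹^2*(2/(D*(D+1)) + 1/(1000*D^10))
      - 4*D⁻¹^3*(1/D - 1/(1000*D^10))
      + D⁻¹^4)
      = (9*D^3 - 30*D^2 + 39*D - 18)/(D^3*(D+1)*(D+2)*(D+3))
        + (D^3+4*D^2+6*D+4)/(1000*D^12) := by
    field_simp
    ring
  have e2 : 2500*(2/(D+1) - 3/(2*D))^3 = 2500*(D-3)^3/(8*D^3*(D+1)^3) := by
    field_simp
    ring
  rw [e1, e2]
  have step1 : (D^3+4*D^2+6*D+4)/(1000*D^12) ≤ 1/(1000000*D^3) := by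
    rw [div_le_div_iff₀ (by positivity) (by positivity)]
    nlinarith [pow_nonneg hu 9, pow_nonneg hu 8, pow_nonneg hu 7, pow_nonneg hu 6,
      pow_nonneg hu 5, pow_nonneg hu 4, pow_nonneg hu 3, pow_nonneg hu 2, hu]
  have step2 : (9*D^3 - 30*D^2 + 39*D - 18)/(D^3*(D+1)*(D+2)*(D+3)) + 1/(1000000*D^3)
      ≤ 2500*(D-3)^3/(8*D^3*(D+1)^3) := by
    rw [div_add_div _ _ (by positivity) (by positivity),
      div_le_div_iff₀ (by positivity) (by positivity)]
    nlinarith [pow_nonneg hu 13, pow_nonneg hu 12, pow_nonneg hu 11, pow_nonneg hu 10,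
      pow_nonneg hu 9, pow_nonneg hu 8, pow_nonneg hu 7, pow_nonneg hu 6,
      pow_nonneg hu 5, pow_nonneg hu 4, pow_nonneg hu 3, pow_nonneg hu 2, hu]
  linarith

lemma factA (D : ℝ) (hD : 4 ≤ D) :
    (D * (24/(D*(D+1)*(D+2)*(D+3)) + 1/(1000*D^10))
      + (D^2 - D) * (4/(D*(D+1)*(D+2)*(D+3)) + 1/(1000*D^10)))
    - 2*(2/(D+1)) * (D * (2/(D*(D+1)) - 1/(1000*D^10)))
    + (2/(D+1))^2 ≤ 25 / D^3 := by
  have hD0 : (0:ℝ) < D := by linarith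
  have h1 : (0:ℝ) < D+1 := by linarith
  have h2 : (0:ℝ) < D+2 := by linarith
  have h3 : (0:ℝ) < D+3 := by linarith
  have hu : (0:ℝ) ≤ D - 4 := by linarith
  have e1 : (D * (24/(D*(D+1)*(D+2)*(D+3)) + 1/(1000*D^10))
      + (D^2 - D) * (4/(D*(D+1)*(D+2)*(D+3)) + 1/(1000*D^10)))
    - 2*(2/(D+1)) * (D * (2/(D*(D+1)) - 1/(1000*D^10)))
    + (2/(D+1))^2
      = (4*D-4)/((D+1)^2*(D+2)*(D+3)) + (D^3+D^2+4*D)/(1000*D^10*(D+1)) := by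
    field_simp
    ring
  rw [e1]
  have step1 : (D^3+D^2+4*D)/(1000*D^10*(D+1)) ≤ 2/(1000000*D^3) := by
    rw [div_le_div_iff₀ (by positivity) (by positivity)]
    nlinarith [pow_nonneg hu 8, pow_nonneg hu 7, pow_nonneg hu 6,
      pow_nonneg hu 5, pow_nonneg hu 4, pow_nonneg hu 3, pow_nonneg hu 2, hu]
  have step2 : (4*D-4)/((D+1)^2*(D+2)*(D+3)) + 2/(1000000*D^3) ≤ 25/D^3 := by
    rw [div_add_div _ _ (by positivity) (by positivity),
      div_le_div_iff₀ (by positivity) (by positivity)]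
    nlinarith [pow_nonneg hu 8, pow_nonneg hu 7, pow_nonneg hu 6,
      pow_nonneg hu 5, pow_nonneg hu 4, pow_nonneg hu 3, pow_nonneg hu 2, hu]
  linarith

lemma aux_cs {ι : Type*} [Fintype ι] (a : ι → ℝ) :
    (∑ x : ι, a x ^ 2) ^ 4 ≤ (∑ x : ι, |a x|) ^ 2 * ((∑ x : ι, a x ^ 2) * (∑ x : ι, a x ^ 4)) := by
  have h1 : (∑ x : ι, a x ^ 2) ^ 2 ≤ (∑ x : ι, |a x|) * (∑ x : ι, |a x| ^ 3) := by
    apply Finset.sum_sq_le_sum_mul_sum_of_sq_eq_mul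
    · exact fun i _ => abs_nonneg _
    · exact fun i _ => pow_nonneg (abs_nonneg _) 3
    · intro i _
      have h : |a i| * |a i| ^ 3 = |a i| ^ 4 := by ring
      rw [h, ← abs_pow, abs_of_nonneg (by positivity : (0:ℝ) ≤ a i ^ 4)]
      ring
  have h2 : (∑ x : ι, |a x| ^ 3) ^ 2 ≤ (∑ x : ι, a x ^ 2) * (∑ x : ι, a x ^ 4) := by
    apply Finset.sum_sq_le_sum_mul_sum_of_sq_eq_mul
    · exact fun i _ => sq_nonneg _
    · exact fun i _ => by positivity
    · intro i _
      have h : (|a i| ^ 3) ^ 2 = |a i| ^ 6 := by ring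
      rw [h, ← abs_pow, abs_of_nonneg (by positivity : (0:ℝ) ≤ a i ^ 6)]
      ring
  have hs1 : (0:ℝ) ≤ ∑ x : ι, |a x| := Finset.sum_nonneg fun i _ => abs_nonneg _
  calc (∑ x : ι, a x ^ 2) ^ 4 = ((∑ x : ι, a x ^ 2) ^ 2) ^ 2 := by ring
    _ ≤ ((∑ x : ι, |a x|) * (∑ x : ι, |a x| ^ 3)) ^ 2 :=
        pow_le_pow_left₀ (sq_nonneg _) h1 2
    _ = (∑ x : ι, |a x|) ^ 2 * (∑ x : ι, |a x| ^ 3) ^ 2 := by ring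
    _ ≤ (∑ x : ι, |a x|) ^ 2 * ((∑ x : ι, a x ^ 2) * (∑ x : ι, a x ^ 4)) :=
        mul_le_mul_of_nonneg_left h2 (sq_nonneg _)

set_option maxHeartbeats 2000000 in
/-- **Far from uniform for approximate 4-designs.** Let `μ` be a probability measure on the
unit sphere of `ℂ^{2^n}` (`n ≥ 2`) whose output-probability moments of total degree at most 4
match the Haar values up to additive error `10⁻³·(2^n)⁻¹⁰`: for pairwise distinct strings
`x₁,…,x_k` and positive integers `λ₁,…,λ_k` with `t = Σλ_l ≤ 4`,
`|E_ψ[∏_l P_ψ(x_l)^{λ_l}] − (∏_l λ_l!)/(D(D+1)⋯(D+t−1))| ≤ 10⁻³·D⁻¹⁰` where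
`P_ψ(x) = |ψ_x|²`. Then for every `c > 0`,
`μ{ψ : d_TV(P_ψ, 𝒰) ≥ 1/(20√(c+18))} ≥ 1 − 100·2⁻ⁿ − 25/c`. -/
theorem stmt_12 (n : ℕ) (hn : 2 ≤ n)
    (μ : Measure (EuclideanSpace ℂ (Fin n → Bool))) [IsProbabilityMeasure μ]
    (hsphere : μ (Metric.sphere 0 1) = 1)
    (hmom : ∀ (k : ℕ) (x : Fin k → (Fin n → Bool)) (lam : Fin k → ℕ),
      Function.Injective x → (∀ l, 1 ≤ lam l) → (∑ l, lam l) ≤ 4 →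
      |(∫ ψ, ∏ l : Fin k, ‖ψ (x l)‖ ^ (2 * lam l) ∂μ)
          - (∏ l : Fin k, (Nat.factorial (lam l) : ℝ))
              / ∏ j ∈ Finset.range (∑ l, lam l), ((2 : ℝ) ^ n + j)|
        ≤ 1 / (1000 * ((2 : ℝ) ^ n) ^ 10))
    (c : ℝ) (hc : 0 < c) :
    ENNReal.ofReal (1 - 100 * ((2 : ℝ) ^ n)⁻¹ - 25 / c)
      ≤ μ {ψ | 1 / (20 * Real.sqrt (c + 18))
            ≤ (1 / 2) * ∑ x : Fin n → Bool,
                |‖ψ x‖ ^ 2 - ((2 : ℝ) ^ n)⁻¹|} := by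
  classical
  have hD4 : (4:ℝ) ≤ (2:ℝ)^n := by
    calc (4:ℝ) = 2^2 := by norm_num
    _ ≤ 2^n := by exact pow_le_pow_right₀ (by norm_num) hn
  set D : ℝ := (2:ℝ)^n with hDdef
  have hD0 : (0:ℝ) < D := by linarith
  set err : ℝ := 1/(1000*D^10) with herrdef
  have herr0 : 0 < err := by rw [herrdef]; positivity
  -- moments, k = 1
  have hmom1 : ∀ (x : Fin n → Bool) (t : ℕ), 1 ≤ t → t ≤ 4 →
      |(∫ ψ, ‖ψ x‖ ^ (2 * t) ∂μ)
        - (t.factorial : ℝ) / ∏ j ∈ Finset.range t, (D + j)| ≤ err := by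
    intro x t ht ht4
    have h := hmom 1 (fun _ => x) (fun _ => t)
      (fun a b _ => Subsingleton.elim a b) (fun _ => ht)
      (by simpa using ht4)
    simpa using h
  have hI1 : ∀ x, |(∫ ψ, ‖ψ x‖^2 ∂μ) - 1/D| ≤ err := by
    intro x
    have h := hmom1 x 1 le_rfl (by norm_num)
    have he : (fun ψ : EuclideanSpace ℂ (Fin n → Bool) => ‖ψ x‖ ^ (2*1))
        = fun ψ => ‖ψ x‖^2 := by
      funext ψ; norm_num
    rw [he] at h
    norm_num [Finset.prod_range_succ] at h
    rw [one_div]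
    exact h
  have hI2 : ∀ x, |(∫ ψ, (‖ψ x‖^2)^2 ∂μ) - 2/(D*(D+1))| ≤ err := by
    intro x
    have h := hmom1 x 2 (by norm_num) (by norm_num)
    have he : (fun ψ : EuclideanSpace ℂ (Fin n → Bool) => ‖ψ x‖ ^ (2*2))
        = fun ψ => (‖ψ x‖^2)^2 := by
      funext ψ; rw [pow_mul]
    rw [he] at h
    norm_num [Finset.prod_range_succ] at h
    convert h using 2
  have hI3 : ∀ x, |(∫ ψ, (‖ψ x‖^2)^3 ∂μ) - 6/(D*(D+1)*(D+2))| ≤ err := by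
    intro x
    have h := hmom1 x 3 (by norm_num) (by norm_num)
    have he : (fun ψ : EuclideanSpace ℂ (Fin n → Bool) => ‖ψ x‖ ^ (2*3))
        = fun ψ => (‖ψ x‖^2)^3 := by
      funext ψ; rw [pow_mul]
    rw [he] at h
    norm_num [Finset.prod_range_succ, Nat.factorial] at h
    convert h using 2
  have hI4 : ∀ x, |(∫ ψ, (‖ψ x‖^2)^4 ∂μ) - 24/(D*(D+1)*(D+2)*(D+3))| ≤ err := by
    intro x
    have h := hmom1 x 4 (by norm_num) (by norm_num)
    have he : (fun ψ : EuclideanSpace ℂ (Fin n → Bool) => ‖ψ x‖ ^ (2*4))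
        = fun ψ => (‖ψ x‖^2)^4 := by
      funext ψ; rw [pow_mul]
    rw [he] at h
    norm_num [Finset.prod_range_succ, Nat.factorial] at h
    convert h using 2
  have hJ : ∀ x y : Fin n → Bool, x ≠ y →
      |(∫ ψ, (‖ψ x‖ ^ 2) ^ 2 * (‖ψ y‖ ^ 2) ^ 2 ∂μ)
        - 4 / (D * (D+1) * (D+2) * (D+3))| ≤ err := by
    intro x y hxy
    have hinj : Function.Injective ![x, y] := by
      intro a b hab
      fin_cases a <;> fin_cases b <;> simp_all
    have h := hmom 2 ![x, y] (fun _ => 2) hinj (fun _ => by norm_num)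
      (by simp [Fin.sum_univ_two])
    simp only [Fin.prod_univ_two, Fin.sum_univ_two, Matrix.cons_val_zero,
      Matrix.cons_val_one, Matrix.head_cons] at h
    norm_num [Finset.prod_range_succ] at h
    rw [show (4:ℝ) / (D * (D+1) * (D+2) * (D+3)) = 2 * 2 / (D * (D+1) * (D+2) * (D+3)) by norm_num]
    convert h using 4
    · funext ψ; rw [show (4:ℕ) = 2*2 from rfl, pow_mul, pow_mul]
    · ring
  -- measurability and sphere facts
  have hPm : ∀ x : Fin n → Bool,
      Measurable (fun ψ : EuclideanSpace ℂ (Fin n → Bool) => ‖ψ x‖) := by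
    intro x
    have h : (fun ψ : EuclideanSpace ℂ (Fin n → Bool) => ‖ψ x‖)
        = fun ψ : EuclideanSpace ℂ (Fin n → Bool) => ‖ψ x‖ := by
      funext ψ; rfl
    rw [h]
    exact ((measurable_pi_apply x).comp (WithLp.measurable_ofLp 2 _)).norm
  have hsph_meas : MeasurableSet (Metric.sphere (0 : EuclideanSpace ℂ (Fin n → Bool)) 1) :=
    Metric.isClosed_sphere.measurableSet
  have hae : ∀ᵐ ψ ∂μ, ψ ∈ Metric.sphere (0 : EuclideanSpace ℂ (Fin n → Bool)) 1 := by
    rw [ae_iff]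
    have : {ψ : EuclideanSpace ℂ (Fin n → Bool) | ¬ ψ ∈ Metric.sphere (0 : EuclideanSpace ℂ (Fin n → Bool)) 1}
        = (Metric.sphere (0 : EuclideanSpace ℂ (Fin n → Bool)) 1)ᶜ := rfl
    rw [this, measure_compl hsph_meas (measure_ne_top μ _), hsphere, measure_univ, tsub_self]
  have hsum1 : ∀ ψ ∈ Metric.sphere (0 : EuclideanSpace ℂ (Fin n → Bool)) 1,
      ∑ x : Fin n → Bool, ‖ψ x‖ ^ 2 = 1 := by
    intro ψ h
    have hnψ : ‖ψ‖ = 1 := by simpa using h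
    rw [EuclideanSpace.norm_eq, Real.sqrt_eq_one] at hnψ
    rw [← hnψ]
  have habs_le : ∀ ψ ∈ Metric.sphere (0 : EuclideanSpace ℂ (Fin n → Bool)) 1,
      ∀ x : Fin n → Bool, ‖ψ x‖ ^ 2 ≤ 1 := by
    intro ψ h x
    rw [← hsum1 ψ h]
    exact Finset.single_le_sum (f := fun y : Fin n → Bool => ‖ψ y‖ ^ 2) (fun i _ => sq_nonneg _) (Finset.mem_univ x)
  -- generic integrability
  have hint : ∀ (f : EuclideanSpace ℂ (Fin n → Bool) → ℝ) (C : ℝ), Measurable f →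
      (∀ ψ ∈ Metric.sphere (0 : EuclideanSpace ℂ (Fin n → Bool)) 1, |f ψ| ≤ C) →
      Integrable f μ := by
    intro f C hm hb
    exact (integrable_const C).mono' hm.aestronglyMeasurable
      (hae.mono fun ψ h => by simpa [Real.norm_eq_abs] using hb ψ h)
  have hint_pow : ∀ (x : Fin n → Bool) (k : ℕ),
      Integrable (fun ψ => (‖ψ x‖^2)^k) μ := by
    intro x k
    apply hint _ 1 (((hPm x).pow_const 2).pow_const k)
    intro ψ h
    rw [abs_of_nonneg (by positivity)]
    exact pow_le_one₀ (sq_nonneg _) (habs_le ψ h x)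
  have hcard : ((Fintype.card (Fin n → Bool)) : ℝ) = D := by
    have h1 : Fintype.card (Fin n → Bool) = 2^n := by
      simp [Fintype.card_fun]
    rw [h1, hDdef]
    push_cast
    ring
  have hconstsum : ∀ b : ℝ, (∑ _x : Fin n → Bool, b) = D * b := by
    intro b
    rw [Finset.sum_const, Finset.card_univ, nsmul_eq_mul, hcard]
  have hdouble : ∀ b1 b2 : ℝ,
      (∑ x : Fin n → Bool, ∑ y : Fin n → Bool, (if x = y then b1 else b2))
        = D*b1 + (D^2 - D)*b2 := by
    intro b1 b2
    have hxrow : ∀ x : Fin n → Bool,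
        (∑ y : Fin n → Bool, (if x = y then b1 else b2)) = (b1 - b2) + D * b2 := by
      intro x
      have h : ∀ y : Fin n → Bool, (if x = y then b1 else b2)
          = (if x = y then b1 - b2 else 0) + b2 := by
        intro y; split_ifs <;> ring
      rw [Finset.sum_congr rfl (fun y _ => h y), Finset.sum_add_distrib,
        Finset.sum_ite_eq, Finset.sum_const, Finset.card_univ, nsmul_eq_mul, hcard]
      simp
    rw [Finset.sum_congr rfl (fun x _ => hxrow x), Finset.sum_const, Finset.card_univ,
      nsmul_eq_mul, hcard]
    ring
  -- integrability of Q and friends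
  have hintQ : Integrable (fun ψ => ∑ x : Fin n → Bool, (‖ψ x‖^2)^2) μ :=
    integrable_finset_sum _ (fun x _ => hint_pow x 2)
  have hQval : (∫ ψ, (∑ x : Fin n → Bool, (‖ψ x‖^2)^2) ∂μ)
      = ∑ x : Fin n → Bool, ∫ ψ, (‖ψ x‖^2)^2 ∂μ :=
    integral_finset_sum _ (fun x _ => hint_pow x 2)
  have hQlow : D * (2/(D*(D+1)) - err) ≤ ∫ ψ, (∑ x : Fin n → Bool, (‖ψ x‖^2)^2) ∂μ := by
    rw [hQval, ← hconstsum (2/(D*(D+1)) - err)]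
    exact Finset.sum_le_sum fun x _ => by linarith [(abs_le.mp (hI2 x)).1]
  have hQmeas : Measurable (fun ψ : EuclideanSpace ℂ (Fin n → Bool) =>
      ∑ x : Fin n → Bool, (‖ψ x‖^2)^2) :=
    Finset.measurable_sum _ (fun x _ => ((hPm x).pow_const 2).pow_const 2)
  have hQle1 : ∀ ψ ∈ Metric.sphere (0 : EuclideanSpace ℂ (Fin n → Bool)) 1,
      (∑ x : Fin n → Bool, (‖ψ x‖^2)^2) ≤ 1 := by
    intro ψ h
    calc (∑ x : Fin n → Bool, (‖ψ x‖^2)^2)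
        ≤ ∑ x : Fin n → Bool, ‖ψ x‖^2 :=
          Finset.sum_le_sum fun x _ => by nlinarith [habs_le ψ h x, sq_nonneg (‖ψ x‖)]
      _ = 1 := hsum1 ψ h
  have hQnonneg : ∀ ψ : EuclideanSpace ℂ (Fin n → Bool),
      0 ≤ ∑ x : Fin n → Bool, (‖ψ x‖^2)^2 :=
    fun ψ => Finset.sum_nonneg fun x _ => by positivity
  have hint_prod : ∀ x y : Fin n → Bool,
      Integrable (fun ψ => (‖ψ x‖^2)^2 * (‖ψ y‖^2)^2) μ := by
    intro x y
    apply hint _ 1 ((((hPm x).pow_const 2).pow_const 2).mul (((hPm y).pow_const 2).pow_const 2))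
    intro ψ h
    show |(‖ψ x‖^2)^2 * (‖ψ y‖^2)^2| ≤ 1
    rw [abs_of_nonneg (by positivity)]
    have h1 : (‖ψ x‖^2)^2 ≤ 1 := pow_le_one₀ (sq_nonneg _) (habs_le ψ h x)
    have h2 : (‖ψ y‖^2)^2 ≤ 1 := pow_le_one₀ (sq_nonneg _) (habs_le ψ h y)
    nlinarith [sq_nonneg (‖ψ x‖^2), sq_nonneg (‖ψ y‖^2)]
  have hintQ2 : Integrable (fun ψ => (∑ x : Fin n → Bool, (‖ψ x‖^2)^2)^2) μ := by
    apply hint _ 1 (hQmeas.pow_const 2)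
    intro ψ h
    rw [abs_of_nonneg (by positivity)]
    exact pow_le_one₀ (hQnonneg ψ) (hQle1 ψ h)
  have hQ2val : (∫ ψ, (∑ x : Fin n → Bool, (‖ψ x‖^2)^2)^2 ∂μ)
      = ∑ x : Fin n → Bool, ∑ y : Fin n → Bool,
          ∫ ψ, (‖ψ x‖^2)^2 * (‖ψ y‖^2)^2 ∂μ := by
    have heq : (fun ψ : EuclideanSpace ℂ (Fin n → Bool) =>
        (∑ x : Fin n → Bool, (‖ψ x‖^2)^2)^2)
        = fun ψ => ∑ x : Fin n → Bool, ∑ y : Fin n → Bool,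
            (‖ψ x‖^2)^2 * (‖ψ y‖^2)^2 := by
      funext ψ
      rw [sq, Finset.sum_mul_sum]
    rw [heq, integral_finset_sum _ (fun x _ => integrable_finset_sum _ (fun y _ => hint_prod x y))]
    exact Finset.sum_congr rfl fun x _ => integral_finset_sum _ (fun y _ => hint_prod x y)
  have hQ2le : (∫ ψ, (∑ x : Fin n → Bool, (‖ψ x‖^2)^2)^2 ∂μ)
      ≤ D * (24/(D*(D+1)*(D+2)*(D+3)) + err) + (D^2 - D) * (4/(D*(D+1)*(D+2)*(D+3)) + err) := by
    rw [hQ2val, ← hdouble (24/(D*(D+1)*(D+2)*(D+3)) + err) (4/(D*(D+1)*(D+2)*(D+3)) + err)]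
    apply Finset.sum_le_sum
    intro x _
    apply Finset.sum_le_sum
    intro y _
    by_cases hxy : x = y
    · subst hxy
      rw [if_pos rfl]
      have heq : (fun ψ : EuclideanSpace ℂ (Fin n → Bool) =>
          (‖ψ x‖^2)^2 * (‖ψ x‖^2)^2)
          = fun ψ => (‖ψ x‖^2)^4 := by
        funext ψ; ring
      rw [heq]
      linarith [(abs_le.mp (hI4 x)).2]
    · simp only [if_neg hxy]
      linarith [(abs_le.mp (hJ x y hxy)).2]
  -- Chebyshev part
  have hg2meas : Measurable (fun ψ : EuclideanSpace ℂ (Fin n → Bool) =>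
      ((∑ x : Fin n → Bool, (‖ψ x‖^2)^2) - 2/(D+1))^2) :=
    (hQmeas.sub measurable_const).pow_const 2
  have hm1 : 2/(D+1) ≤ 1 := by
    rw [div_le_one (by linarith)]
    linarith
  have hm0 : (0:ℝ) < 2/(D+1) := by positivity
  have hintg2 : Integrable (fun ψ =>
      ((∑ x : Fin n → Bool, (‖ψ x‖^2)^2) - 2/(D+1))^2) μ := by
    apply hint _ 1 hg2meas
    intro ψ h
    rw [abs_of_nonneg (by positivity)]
    nlinarith [hQle1 ψ h, hQnonneg ψ]
  have hg2val : (∫ ψ, ((∑ x : Fin n → Bool, (‖ψ x‖^2)^2) - 2/(D+1))^2 ∂μ)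
      = (∫ ψ, (∑ x : Fin n → Bool, (‖ψ x‖^2)^2)^2 ∂μ)
        - 2*(2/(D+1)) * (∫ ψ, (∑ x : Fin n → Bool, (‖ψ x‖^2)^2) ∂μ)
        + (2/(D+1))^2 := by
    have heq : (fun ψ : EuclideanSpace ℂ (Fin n → Bool) =>
        ((∑ x : Fin n → Bool, (‖ψ x‖^2)^2) - 2/(D+1))^2)
        = fun ψ => ((∑ x : Fin n → Bool, (‖ψ x‖^2)^2)^2
            - (2*(2/(D+1))) * (∑ x : Fin n → Bool, (‖ψ x‖^2)^2)) + (2/(D+1))^2 := by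
      funext ψ; ring
    have ha1 : Integrable (fun ψ : EuclideanSpace ℂ (Fin n → Bool) =>
        (∑ x : Fin n → Bool, (‖ψ x‖^2)^2)^2
          - (2*(2/(D+1))) * (∑ x : Fin n → Bool, (‖ψ x‖^2)^2)) μ :=
      hintQ2.sub (hintQ.const_mul _)
    rw [heq, integral_add ha1 (integrable_const _),
      integral_sub hintQ2 (hintQ.const_mul (2*(2/(D+1)))), integral_const_mul _, integral_const]
    simp [measure_univ]
  have hg2le : (∫ ψ, ((∑ x : Fin n → Bool, (‖ψ x‖^2)^2) - 2/(D+1))^2 ∂μ)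
      ≤ 25/D^3 := by
    have fA := factA D hD4
    rw [← herrdef] at fA
    have hmono := mul_le_mul_of_nonneg_left hQlow (by positivity : (0:ℝ) ≤ 2*(2/(D+1)))
    rw [hg2val]
    linarith [hQ2le, hmono, fA]
  have markA := mul_meas_ge_le_integral_of_nonneg
    (ae_of_all μ (fun ψ : EuclideanSpace ℂ (Fin n → Bool) =>
      sq_nonneg ((∑ x : Fin n → Bool, (‖ψ x‖^2)^2) - 2/(D+1)))) hintg2 (1/(4*D^2))
  have hμA : (μ {ψ : EuclideanSpace ℂ (Fin n → Bool) |
      1/(4*D^2) ≤ ((∑ x : Fin n → Bool, (‖ψ x‖^2)^2) - 2/(D+1))^2}).toReal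
        ≤ 100/D := by
    have h := le_trans markA hg2le
    have e : (25:ℝ)/D^3 = (1/(4*D^2)) * (100/D) := by
      field_simp
      ring
    rw [e] at h
    exact le_of_mul_le_mul_left h (by positivity)
  -- R = fourth central moments
  have hDinv1 : D⁻¹ ≤ 1 := by
    rw [← one_div, div_le_one hD0]
    linarith
  have hDinv0 : (0:ℝ) < D⁻¹ := by positivity
  have hint_A : ∀ x : Fin n → Bool, Integrable (fun ψ => ‖ψ x‖^2) μ := by
    intro x
    apply hint _ 1 ((hPm x).pow_const 2)
    intro ψ h
    rw [abs_of_nonneg (sq_nonneg _)]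
    exact habs_le ψ h x
  have hint_dev : ∀ x : Fin n → Bool,
      Integrable (fun ψ => (‖ψ x‖^2 - D⁻¹)^4) μ := by
    intro x
    apply hint _ 1 ((((hPm x).pow_const 2).sub measurable_const).pow_const 4)
    intro ψ h
    have habs : |‖ψ x‖^2 - D⁻¹| ≤ 1 :=
      abs_le.mpr ⟨by linarith [sq_nonneg (‖ψ x‖)], by linarith [habs_le ψ h x]⟩
    rw [abs_pow]
    exact pow_le_one₀ (abs_nonneg _) habs
  have hRval : (∫ ψ, ∑ x : Fin n → Bool, (‖ψ x‖^2 - D⁻¹)^4 ∂μ)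
      = ∑ x : Fin n → Bool, ∫ ψ, (‖ψ x‖^2 - D⁻¹)^4 ∂μ :=
    integral_finset_sum _ (fun x _ => hint_dev x)
  have hRx : ∀ x : Fin n → Bool, (∫ ψ, (‖ψ x‖^2 - D⁻¹)^4 ∂μ)
      ≤ (24/(D*(D+1)*(D+2)*(D+3)) + err) - 4*D⁻¹*(6/(D*(D+1)*(D+2)) - err)
        + 6*D⁻¹^2*(2/(D*(D+1)) + err) - 4*D⁻¹^3*(1/D - err) + D⁻¹^4 := by
    intro x
    have heq : (fun ψ : EuclideanSpace ℂ (Fin n → Bool) => (‖ψ x‖^2 - D⁻¹)^4)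
        = fun ψ => ((((‖ψ x‖^2)^4 - (4*D⁻¹) * (‖ψ x‖^2)^3)
            + (6*D⁻¹^2) * (‖ψ x‖^2)^2) - (4*D⁻¹^3) * (‖ψ x‖^2)) + D⁻¹^4 := by
      funext ψ; ring
    have ha1 : Integrable (fun ψ : EuclideanSpace ℂ (Fin n → Bool) =>
        (‖ψ x‖^2)^4 - (4*D⁻¹) * (‖ψ x‖^2)^3) μ :=
      (hint_pow x 4).sub ((hint_pow x 3).const_mul _)
    have ha2 : Integrable (fun ψ : EuclideanSpace ℂ (Fin n → Bool) =>
        ((‖ψ x‖^2)^4 - (4*D⁻¹) * (‖ψ x‖^2)^3)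
          + (6*D⁻¹^2) * (‖ψ x‖^2)^2) μ :=
      ha1.add ((hint_pow x 2).const_mul _)
    have ha3 : Integrable (fun ψ : EuclideanSpace ℂ (Fin n → Bool) =>
        (((‖ψ x‖^2)^4 - (4*D⁻¹) * (‖ψ x‖^2)^3)
          + (6*D⁻¹^2) * (‖ψ x‖^2)^2) - (4*D⁻¹^3) * (‖ψ x‖^2)) μ :=
      ha2.sub ((hint_A x).const_mul _)
    rw [heq, integral_add ha3 (integrable_const _), integral_sub ha2 ((hint_A x).const_mul _),
      integral_add ha1 ((hint_pow x 2).const_mul _),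
      integral_sub (hint_pow x 4) ((hint_pow x 3).const_mul _),
      integral_const_mul _, integral_const_mul _, integral_const_mul _, integral_const]
    simp only [measure_univ, ENNReal.toReal_one, smul_eq_mul, one_mul, probReal_univ]
    have u4 : (∫ ψ, (‖ψ x‖^2)^4 ∂μ) ≤ 24/(D*(D+1)*(D+2)*(D+3)) + err := by
      linarith [(abs_le.mp (hI4 x)).2]
    have l3 : 6/(D*(D+1)*(D+2)) - err ≤ ∫ ψ, (‖ψ x‖^2)^3 ∂μ := by
      linarith [(abs_le.mp (hI3 x)).1]
    have u2 : (∫ ψ, (‖ψ x‖^2)^2 ∂μ) ≤ 2/(D*(D+1)) + err := by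
      linarith [(abs_le.mp (hI2 x)).2]
    have l1 : 1/D - err ≤ ∫ ψ, ‖ψ x‖^2 ∂μ := by
      linarith [(abs_le.mp (hI1 x)).1]
    have m3 := mul_le_mul_of_nonneg_left l3 (by positivity : (0:ℝ) ≤ 4*D⁻¹)
    have m2 := mul_le_mul_of_nonneg_left u2 (by positivity : (0:ℝ) ≤ 6*D⁻¹^2)
    have m1 := mul_le_mul_of_nonneg_left l1 (by positivity : (0:ℝ) ≤ 4*D⁻¹^3)
    linarith [u4, m3, m2, m1]
  have ha : (0:ℝ) < 2/(D+1) - 3/(2*D) := by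
    rw [sub_pos, div_lt_div_iff₀ (by positivity) (by linarith)]
    nlinarith
  have hRle : (∫ ψ, ∑ x : Fin n → Bool, (‖ψ x‖^2 - D⁻¹)^4 ∂μ)
      ≤ 2500*(2/(D+1) - 3/(2*D))^3 := by
    have fB := factB D hD4
    rw [← herrdef] at fB
    calc (∫ ψ, ∑ x : Fin n → Bool, (‖ψ x‖^2 - D⁻¹)^4 ∂μ)
        = ∑ x : Fin n → Bool, ∫ ψ, (‖ψ x‖^2 - D⁻¹)^4 ∂μ := hRval
      _ ≤ ∑ _x : Fin n → Bool, ((24/(D*(D+1)*(D+2)*(D+3)) + err)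
            - 4*D⁻¹*(6/(D*(D+1)*(D+2)) - err) + 6*D⁻¹^2*(2/(D*(D+1)) + err)
            - 4*D⁻¹^3*(1/D - err) + D⁻¹^4) := Finset.sum_le_sum (fun x _ => hRx x)
      _ = D * ((24/(D*(D+1)*(D+2)*(D+3)) + err) - 4*D⁻¹*(6/(D*(D+1)*(D+2)) - err)
            + 6*D⁻¹^2*(2/(D*(D+1)) + err) - 4*D⁻¹^3*(1/D - err) + D⁻¹^4) := hconstsum _
      _ ≤ 2500*(2/(D+1) - 3/(2*D))^3 := fB
  have hT0 : (0:ℝ) < 100*(2/(D+1) - 3/(2*D))^3*(c+18) :=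
    mul_pos (mul_pos (by norm_num) (pow_pos ha 3)) (by linarith)
  have markB := mul_meas_ge_le_integral_of_nonneg
    (ae_of_all μ (fun ψ : EuclideanSpace ℂ (Fin n → Bool) =>
      Finset.sum_nonneg fun x _ => by positivity))
    (integrable_finset_sum (μ := μ) Finset.univ (fun (x : Fin n → Bool) _ => hint_dev x))
    (100*(2/(D+1) - 3/(2*D))^3*(c+18))
  have hμB : (μ {ψ : EuclideanSpace ℂ (Fin n → Bool) |
      100*(2/(D+1) - 3/(2*D))^3*(c+18) ≤ ∑ x : Fin n → Bool,
        (‖ψ x‖^2 - D⁻¹)^4}).toReal ≤ 25/c := by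
    have h := le_trans markB hRle
    have e : 2500*(2/(D+1) - 3/(2*D))^3
        = (100*(2/(D+1) - 3/(2*D))^3*(c+18)) * (25/(c+18)) := by
      field_simp
      ring
    rw [e] at h
    have h2 := le_of_mul_le_mul_left h hT0
    have h3 : (25:ℝ)/(c+18) ≤ 25/c := by
      rw [div_le_div_iff₀ (by linarith) hc]
      linarith
    exact le_trans h2 h3
  -- final assembly
  set S := {ψ : EuclideanSpace ℂ (Fin n → Bool) | 1 / (20 * Real.sqrt (c + 18))
      ≤ (1 / 2) * ∑ x : Fin n → Bool, |‖ψ x‖ ^ 2 - D⁻¹|} with hSdef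
  have hsub : Sᶜ ⊆ ({ψ : EuclideanSpace ℂ (Fin n → Bool) |
        1/(4*D^2) ≤ ((∑ x : Fin n → Bool, (‖ψ x‖^2)^2) - 2/(D+1))^2}
      ∪ {ψ : EuclideanSpace ℂ (Fin n → Bool) |
        100*(2/(D+1) - 3/(2*D))^3*(c+18) ≤ ∑ x : Fin n → Bool,
          (‖ψ x‖^2 - D⁻¹)^4})
      ∪ (Metric.sphere (0 : EuclideanSpace ℂ (Fin n → Bool)) 1)ᶜ := by
    intro ψ hψ
    by_contra hcon
    simp only [Set.mem_union, Set.mem_compl_iff, Set.mem_setOf_eq, not_or, not_le, not_not] at hcon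
    obtain ⟨⟨hga, hgb⟩, hsph⟩ := hcon
    apply hψ
    have hsum := hsum1 ψ hsph
    have hs2eq : ∑ x : Fin n → Bool, (‖ψ x‖^2 - D⁻¹)^2
        = (∑ x : Fin n → Bool, (‖ψ x‖^2)^2) - D⁻¹ := by
      have hexp : ∀ x : Fin n → Bool, (‖ψ x‖^2 - D⁻¹)^2
          = ((‖ψ x‖^2)^2 - (2*D⁻¹)*(‖ψ x‖^2)) + D⁻¹^2 := fun x => by ring
      rw [Finset.sum_congr rfl (fun x _ => hexp x), Finset.sum_add_distrib,
        Finset.sum_sub_distrib, ← Finset.mul_sum, hsum, hconstsum (D⁻¹^2), mul_one]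
      have hDD : D * D⁻¹^2 = D⁻¹ := by
        rw [pow_two, ← mul_assoc, mul_inv_cancel₀ (ne_of_gt hD0), one_mul]
      rw [hDD]
      ring
    have hQgt : 2/(D+1) - 1/(2*D) < ∑ x : Fin n → Bool, (‖ψ x‖^2)^2 := by
      have hsq : (1/(2*D))^2 = 1/(4*D^2) := by
        field_simp
        ring
      have he : (0:ℝ) < 1/(2*D) := by positivity
      nlinarith [hga, sq_nonneg ((∑ x : Fin n → Bool, (‖ψ x‖^2)^2)
        - 2/(D+1) + 1/(2*D)), he, hsq]
    have h32 : 1/(2*D) + D⁻¹ = 3/(2*D) := by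
      field_simp
      ring
    have hs2gt : 2/(D+1) - 3/(2*D) < ∑ x : Fin n → Bool, (‖ψ x‖^2 - D⁻¹)^2 := by
      rw [hs2eq]
      linarith
    have hcs := aux_cs (fun x : Fin n → Bool => ‖ψ x‖^2 - D⁻¹)
    have hs1nn : (0:ℝ) ≤ ∑ x : Fin n → Bool, |‖ψ x‖^2 - D⁻¹| :=
      Finset.sum_nonneg fun x _ => abs_nonneg _
    have hs2pos : (0:ℝ) < ∑ x : Fin n → Bool, (‖ψ x‖^2 - D⁻¹)^2 :=
      lt_trans ha hs2gt
    have key : (∑ x : Fin n → Bool, (‖ψ x‖^2 - D⁻¹)^2)^3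
        ≤ (∑ x : Fin n → Bool, |‖ψ x‖^2 - D⁻¹|)^2
          * (∑ x : Fin n → Bool, (‖ψ x‖^2 - D⁻¹)^4) := by
      nlinarith [hcs, hs2pos]
    have h7 : (2/(D+1) - 3/(2*D))^3
        < (∑ x : Fin n → Bool, (‖ψ x‖^2 - D⁻¹)^2)^3 :=
      pow_lt_pow_left₀ hs2gt (le_of_lt ha) (by norm_num)
    have h8 : (∑ x : Fin n → Bool, |‖ψ x‖^2 - D⁻¹|)^2
          * (∑ x : Fin n → Bool, (‖ψ x‖^2 - D⁻¹)^4)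
        ≤ (∑ x : Fin n → Bool, |‖ψ x‖^2 - D⁻¹|)^2
          * (100*(2/(D+1) - 3/(2*D))^3*(c+18)) :=
      mul_le_mul_of_nonneg_left (le_of_lt hgb) (sq_nonneg _)
    have h6 : 1 < 100*(c+18) * (∑ x : Fin n → Bool, |‖ψ x‖^2 - D⁻¹|)^2 := by
      nlinarith [pow_pos ha 3, h7, key, h8]
    have hsqrt2 : Real.sqrt (c+18)^2 = c + 18 := Real.sq_sqrt (by linarith)
    have hsqrt0 : (0:ℝ) < Real.sqrt (c+18) := Real.sqrt_pos.mpr (by linarith)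
    have he2 : (1/(10*Real.sqrt (c+18)))^2 = 1/(100*(c+18)) := by
      rw [div_pow, mul_pow, hsqrt2]
      norm_num
    have hlt2 : (1/(10*Real.sqrt (c+18)))^2
        < (∑ x : Fin n → Bool, |‖ψ x‖^2 - D⁻¹|)^2 := by
      rw [he2, div_lt_iff₀ (by positivity)]
      nlinarith [h6]
    have hfin : 1/(10*Real.sqrt (c+18)) < ∑ x : Fin n → Bool, |‖ψ x‖^2 - D⁻¹| :=
      lt_of_pow_lt_pow_left₀ 2 hs1nn hlt2
    simp only [hSdef, Set.mem_setOf_eq]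
    have hhalf : 1/(20*Real.sqrt (c+18)) = (1/(10*Real.sqrt (c+18)))/2 := by
      ring
    linarith
  have hμsphc : μ (Metric.sphere (0 : EuclideanSpace ℂ (Fin n → Bool)) 1)ᶜ = 0 := by
    rw [measure_compl hsph_meas (measure_ne_top μ _), hsphere, measure_univ, tsub_self]
  have hμA' : μ {ψ : EuclideanSpace ℂ (Fin n → Bool) |
      1/(4*D^2) ≤ ((∑ x : Fin n → Bool, (‖ψ x‖^2)^2) - 2/(D+1))^2}
        ≤ ENNReal.ofReal (100/D) := by
    rw [← ENNReal.ofReal_toReal (measure_ne_top μ _)]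
    exact ENNReal.ofReal_le_ofReal hμA
  have hμB' : μ {ψ : EuclideanSpace ℂ (Fin n → Bool) |
      100*(2/(D+1) - 3/(2*D))^3*(c+18) ≤ ∑ x : Fin n → Bool,
        (‖ψ x‖^2 - D⁻¹)^4} ≤ ENNReal.ofReal (25/c) := by
    rw [← ENNReal.ofReal_toReal (measure_ne_top μ _)]
    exact ENNReal.ofReal_le_ofReal hμB
  have hScle : μ Sᶜ ≤ ENNReal.ofReal (100/D) + ENNReal.ofReal (25/c) := by
    calc μ Sᶜ ≤ μ (({ψ : EuclideanSpace ℂ (Fin n → Bool) |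
          1/(4*D^2) ≤ ((∑ x : Fin n → Bool, (‖ψ x‖^2)^2) - 2/(D+1))^2}
        ∪ {ψ : EuclideanSpace ℂ (Fin n → Bool) |
          100*(2/(D+1) - 3/(2*D))^3*(c+18) ≤ ∑ x : Fin n → Bool,
            (‖ψ x‖^2 - D⁻¹)^4})
        ∪ (Metric.sphere (0 : EuclideanSpace ℂ (Fin n → Bool)) 1)ᶜ) := measure_mono hsub
      _ ≤ μ ({ψ : EuclideanSpace ℂ (Fin n → Bool) |
          1/(4*D^2) ≤ ((∑ x : Fin n → Bool, (‖ψ x‖^2)^2) - 2/(D+1))^2}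
        ∪ {ψ : EuclideanSpace ℂ (Fin n → Bool) |
          100*(2/(D+1) - 3/(2*D))^3*(c+18) ≤ ∑ x : Fin n → Bool,
            (‖ψ x‖^2 - D⁻¹)^4})
          + μ (Metric.sphere (0 : EuclideanSpace ℂ (Fin n → Bool)) 1)ᶜ := measure_union_le _ _
      _ = μ ({ψ : EuclideanSpace ℂ (Fin n → Bool) |
          1/(4*D^2) ≤ ((∑ x : Fin n → Bool, (‖ψ x‖^2)^2) - 2/(D+1))^2}
        ∪ {ψ : EuclideanSpace ℂ (Fin n → Bool) |
          100*(2/(D+1) - 3/(2*D))^3*(c+18) ≤ ∑ x : Fin n → Bool,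
            (‖ψ x‖^2 - D⁻¹)^4}) := by rw [hμsphc, add_zero]
      _ ≤ μ {ψ : EuclideanSpace ℂ (Fin n → Bool) |
          1/(4*D^2) ≤ ((∑ x : Fin n → Bool, (‖ψ x‖^2)^2) - 2/(D+1))^2}
          + μ {ψ : EuclideanSpace ℂ (Fin n → Bool) |
          100*(2/(D+1) - 3/(2*D))^3*(c+18) ≤ ∑ x : Fin n → Bool,
            (‖ψ x‖^2 - D⁻¹)^4} := measure_union_le _ _
      _ ≤ ENNReal.ofReal (100/D) + ENNReal.ofReal (25/c) := add_le_add hμA' hμB'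
  have hone : (1:ENNReal) ≤ μ S + μ Sᶜ := by
    rw [← measure_univ (μ := μ), ← Set.union_compl_self S]
    exact measure_union_le _ _
  rcases le_or_gt (1 - 100 * D⁻¹ - 25 / c) 0 with hle | hpos
  · rw [ENNReal.ofReal_eq_zero.mpr hle]
    exact zero_le
  · have hx0 : (0:ℝ) ≤ 100 * D⁻¹ := by positivity
    have hx1 : (0:ℝ) ≤ 25 / c := by positivity
    have e100 : ENNReal.ofReal ((100:ℝ)/D) = ENNReal.ofReal (100 * D⁻¹) := by
      rw [div_eq_mul_inv]
    have l1 : ENNReal.ofReal (1 - 100*D⁻¹ - 25/c) + μ Sᶜ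
        ≤ ENNReal.ofReal (1 - 100*D⁻¹ - 25/c)
          + (ENNReal.ofReal (100*D⁻¹) + ENNReal.ofReal (25/c)) := by
      apply add_le_add_right
      rw [e100] at hScle
      exact hScle
    have l2 : ENNReal.ofReal (1 - 100*D⁻¹ - 25/c)
        + (ENNReal.ofReal (100*D⁻¹) + ENNReal.ofReal (25/c)) = 1 := by
      rw [← ENNReal.ofReal_add hx0 hx1,
        ← ENNReal.ofReal_add (le_of_lt hpos) (by positivity)]
      have harg : (1 - 100*D⁻¹ - 25/c) + (100*D⁻¹ + 25/c) = 1 := by ring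
      rw [harg, ENNReal.ofReal_one]
    have step : ENNReal.ofReal (1 - 100*D⁻¹ - 25/c) + μ Sᶜ ≤ μ S + μ Sᶜ :=
      le_trans l1 (le_trans (le_of_eq l2) hone)
    exact (ENNReal.add_le_add_iff_right (measure_ne_top μ Sᶜ)).mp step
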